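/- Let σ, σ', ρ, ρ', s, s' be real parameters with σ < σ'. Then there exists a constant δ > 0 such that for all integers p, q ≥ 1: (p + q − 1)·(p+q)!^σ·2^{ρ(p+q)}·(1 + p + q)^s ≤ δ·(p!)^{σ'}·2^{ρ'p}·(1 + p)^{s'}·(q!)^{σ'}·2^{ρ'q}·(1 + q)^{s'}. -/

import Mathlib

private lemma rpow_le_two_rpow {x m : ℝ} (t : ℝ) (hx : 1 ≤ x) (hm : x ≤ 2 ^ m) :
    x ^ t ≤ (2 : ℝ) ^ (|t| * m) := by
  have h0 : (0:ℝ) ≤ x := le_trans zero_le_one hx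
  calc x ^ t ≤ x ^ |t| := Real.rpow_le_rpow_of_exponent_le hx (le_abs_self t)
    _ ≤ ((2:ℝ) ^ m) ^ |t| := Real.rpow_le_rpow h0 hm (abs_nonneg t)
    _ = (2:ℝ) ^ (m * |t|) := (Real.rpow_mul (by norm_num) m |t|).symm
    _ = (2:ℝ) ^ (|t| * m) := by rw [mul_comm]

private lemma two_rpow_le_rpow {x m : ℝ} (t : ℝ) (hx : 1 ≤ x) (hm : x ≤ 2 ^ m) :
    (2 : ℝ) ^ (-(|t| * m)) ≤ x ^ t := by
  have h0 : (0:ℝ) < x := lt_of_lt_of_le one_pos hx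
  have hup : x ^ (-t) ≤ (2:ℝ) ^ (|t| * m) := by
    have := rpow_le_two_rpow (-t) hx hm
    rwa [abs_neg] at this
  rw [Real.rpow_neg h0.le] at hup
  rw [Real.rpow_neg (by norm_num : (0:ℝ) ≤ 2)]
  have hxt : (0:ℝ) < x ^ t := Real.rpow_pos_of_pos h0 t
  exact (inv_le_iff_one_le_mul₀ (Real.rpow_pos_of_pos two_pos _)).mpr
    (by nlinarith [mul_le_mul_of_nonneg_right hup hxt.le,
      Real.rpow_natCast x 0, mul_inv_cancel₀ (ne_of_gt hxt)])

private lemma two_rpow_le_fact (C ε : ℝ) (hε : 0 < ε) :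
    ∃ E : ℝ, 0 < E ∧ ∀ r : ℕ, (2:ℝ) ^ (C * r) ≤ E * (r.factorial : ℝ) ^ ε := by
  set A := (2:ℝ) ^ (C / ε) with hA_def
  have hA : 0 < A := Real.rpow_pos_of_pos two_pos _
  refine ⟨(Real.exp A) ^ ε, Real.rpow_pos_of_pos (Real.exp_pos A) ε, fun r => ?_⟩
  have hfr : (0:ℝ) < r.factorial := by exact_mod_cast r.factorial_pos
  have h1 : A ^ r ≤ Real.exp A * r.factorial := by
    have := Real.pow_div_factorial_le_exp A hA.le r
    rw [div_le_iff₀ hfr] at this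
    linarith
  have h2 : ((A ^ r : ℝ)) ^ ε ≤ (Real.exp A * r.factorial) ^ ε :=
    Real.rpow_le_rpow (by positivity) h1 hε.le
  rw [Real.mul_rpow (Real.exp_nonneg A) hfr.le] at h2
  have h3 : ((A ^ r : ℝ)) ^ ε = (2:ℝ) ^ (C * r) := by
    rw [hA_def, ← Real.rpow_natCast ((2:ℝ) ^ (C / ε)) r,
      ← Real.rpow_mul (by norm_num : (0:ℝ) ≤ 2),
      ← Real.rpow_mul (by norm_num : (0:ℝ) ≤ 2)]
    congr 1
    field_simp
  rwa [h3] at h2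

private lemma nat_choose_le_two_rpow (n k : ℕ) (hk : k ≤ n) :
    (n.choose k : ℝ) ≤ (2:ℝ) ^ ((n : ℕ) : ℝ) := by
  rw [Real.rpow_natCast]
  have h : n.choose k ≤ 2 ^ n := by
    calc n.choose k ≤ ∑ m ∈ Finset.range (n + 1), n.choose m :=
          Finset.single_le_sum (fun i _ => Nat.zero_le _)
            (Finset.mem_range.mpr (Nat.lt_succ_of_le hk))
      _ = 2 ^ n := Nat.sum_range_choose n
  exact_mod_cast h

private lemma collapse (a b : ℝ) : (2:ℝ) ^ a * (2:ℝ) ^ b = (2:ℝ) ^ (a + b) :=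
  (Real.rpow_add two_pos a b).symm

private lemma one_add_le_two_rpow (r : ℕ) : (1:ℝ) + r ≤ (2:ℝ) ^ ((r : ℕ) : ℝ) := by
  rw [Real.rpow_natCast]
  have h : (r : ℝ) + 1 ≤ (2:ℝ) ^ r := by exact_mod_cast Nat.lt_two_pow_self (n := r)
  linarith

/-- per-variable bound: `2^(D·r) · (r!)^σ ≤ E · w r (σ',ρ',s')`. -/
private lemma per_var (σ σ' ρ' s' D : ℝ) (hσ : σ < σ') :
    ∃ E : ℝ, 0 < E ∧ ∀ r : ℕ, (2:ℝ) ^ (D * r) * (r.factorial : ℝ) ^ σ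
      ≤ E * ((r.factorial : ℝ) ^ σ' * (2:ℝ) ^ (ρ' * r) * (1 + (r:ℝ)) ^ s') := by
  have hε : 0 < σ' - σ := by linarith
  obtain ⟨E, hE, hEr⟩ := two_rpow_le_fact (D + |ρ'| + |s'|) (σ' - σ) hε
  refine ⟨E, hE, fun r => ?_⟩
  have hF0 : (0:ℝ) < (r.factorial : ℝ) := by exact_mod_cast r.factorial_pos
  have hsplit : (2:ℝ) ^ (D * (r:ℝ)) =
      (2:ℝ) ^ ((D + |ρ'| + |s'|) * (r:ℝ)) * ((2:ℝ) ^ (-(|ρ'| * (r:ℝ))) * (2:ℝ) ^ (-(|s'| * (r:ℝ)))) := by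
    rw [collapse, collapse, show (D + |ρ'| + |s'|) * (r:ℝ) + (-(|ρ'| * (r:ℝ)) + -(|s'| * (r:ℝ)))
      = D * (r:ℝ) from by ring]
  have l1 : (2:ℝ) ^ (-(|ρ'| * (r:ℝ))) ≤ (2:ℝ) ^ (ρ' * (r:ℝ)) := by
    apply Real.rpow_le_rpow_of_exponent_le one_le_two
    rw [neg_mul_eq_neg_mul]
    exact mul_le_mul_of_nonneg_right (neg_abs_le ρ') (by positivity)
  have l2 : (2:ℝ) ^ (-(|s'| * (r:ℝ))) ≤ (1 + (r:ℝ)) ^ s' :=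
    two_rpow_le_rpow s' (by linarith [Nat.cast_nonneg (α := ℝ) r]) (one_add_le_two_rpow r)
  calc (2:ℝ) ^ (D * (r:ℝ)) * (r.factorial : ℝ) ^ σ
      = ((2:ℝ) ^ ((D + |ρ'| + |s'|) * (r:ℝ)) * (r.factorial : ℝ) ^ σ)
        * ((2:ℝ) ^ (-(|ρ'| * (r:ℝ))) * (2:ℝ) ^ (-(|s'| * (r:ℝ)))) := by rw [hsplit]; ring
    _ ≤ ((E * (r.factorial : ℝ) ^ (σ' - σ)) * (r.factorial : ℝ) ^ σ)
        * ((2:ℝ) ^ (ρ' * (r:ℝ)) * (1 + (r:ℝ)) ^ s') := by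
        apply mul_le_mul _ (mul_le_mul l1 l2 (by positivity) (by positivity)) (by positivity)
          (by positivity)
        exact mul_le_mul_of_nonneg_right (hEr r) (by positivity)
    _ = E * ((r.factorial : ℝ) ^ (σ' - σ) * (r.factorial : ℝ) ^ σ * (2:ℝ) ^ (ρ' * (r:ℝ))
        * (1 + (r:ℝ)) ^ s') := by ring
    _ = E * ((r.factorial : ℝ) ^ σ' * (2:ℝ) ^ (ρ' * (r:ℝ)) * (1 + (r:ℝ)) ^ s') := by
        rw [← Real.rpow_add hF0, sub_add_cancel]



/-- The weight family `w n (σ, ρ, s) = (n!)^σ · 2^(ρn) · (1+n)^s` on positive integers,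
with real exponents (real powers). -/
noncomputable def wgt (σ ρ s : ℝ) (n : ℕ) : ℝ :=
  ((n.factorial : ℝ)) ^ σ * (2 : ℝ) ^ (ρ * n) * (1 + (n : ℝ)) ^ s

/-- Mixed multiplicative weight inequality for `σ < σ'`: for some constant `δ > 0`,
`(p+q-1)·w (p+q) (σ,ρ,s) ≤ δ·w p (σ',ρ',s')·w q (σ',ρ',s')` for all `p, q ≥ 1` and arbitrary
`ρ, ρ', s, s'`. -/
theorem weight_inequality_mixed_sigma (σ σ' ρ ρ' s s' : ℝ) (hσ : σ < σ') :
    ∃ δ : ℝ, 0 < δ ∧ ∀ p q : ℕ, 1 ≤ p → 1 ≤ q →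
      ((p : ℝ) + q - 1) * wgt σ ρ s (p + q) ≤ δ * wgt σ' ρ' s' p * wgt σ' ρ' s' q := by
  set D : ℝ := 1 + |σ| + |ρ| + |s| with hDdef
  obtain ⟨E, hE, hEr⟩ := per_var σ σ' ρ' s' D hσ
  refine ⟨E * E, by positivity, fun p q hp hq => ?_⟩
  have hP0 : (0:ℝ) < (p.factorial : ℝ) := by exact_mod_cast p.factorial_pos
  have hQ0 : (0:ℝ) < (q.factorial : ℝ) := by exact_mod_cast q.factorial_pos
  have hlen : (1:ℝ) + ((p:ℝ) + (q:ℝ)) ≤ (2:ℝ) ^ ((p:ℝ) + (q:ℝ)) := by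
    have := one_add_le_two_rpow (p + q); push_cast at this; linarith
  set P : ℝ := (p.factorial : ℝ)
  set Q : ℝ := (q.factorial : ℝ)
  set c : ℝ := ((p + q).choose q : ℝ) with hcdef
  have hc1 : (1:ℝ) ≤ c := by
    rw [hcdef]; exact_mod_cast Nat.choose_pos (Nat.le_add_left q p)
  have hc2 : c ≤ (2:ℝ) ^ ((p:ℝ) + (q:ℝ)) := by
    have := nat_choose_le_two_rpow (p+q) q (Nat.le_add_left q p)
    rw [hcdef]; push_cast at this ⊢; exact this
  have hNfac : (p+q).choose q * p.factorial * q.factorial = (p+q).factorial :=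
    Nat.add_choose_mul_factorial_mul_factorial p q
  have hFeq : (((p + q).factorial : ℕ) : ℝ) = c * P * Q := by
    rw [hcdef, ← hNfac]; push_cast; ring
  have hB1 : (((p + q).factorial : ℕ) : ℝ) ^ σ
      ≤ (2:ℝ) ^ (|σ| * ((p:ℝ) + (q:ℝ))) * (P ^ σ * Q ^ σ) := by
    rw [hFeq, Real.mul_rpow (by positivity) hQ0.le, Real.mul_rpow (by positivity) hP0.le,
      mul_assoc]
    gcongr
    exact rpow_le_two_rpow σ hc1 hc2
  have hnn : (0:ℝ) ≤ (p:ℝ) + (q:ℝ) := by positivity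
  have hB3 : (p:ℝ) + (q:ℝ) - 1 ≤ (2:ℝ) ^ ((1:ℝ) * ((p:ℝ) + (q:ℝ))) := by
    rw [one_mul]; linarith
  have hB4 : (2:ℝ) ^ (ρ * ((p:ℝ) + (q:ℝ))) ≤ (2:ℝ) ^ (|ρ| * ((p:ℝ) + (q:ℝ))) :=
    Real.rpow_le_rpow_of_exponent_le one_le_two
      (mul_le_mul_of_nonneg_right (le_abs_self ρ) hnn)
  have hB2 : (1 + ((p:ℝ) + (q:ℝ))) ^ s ≤ (2:ℝ) ^ (|s| * ((p:ℝ) + (q:ℝ))) :=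
    rpow_le_two_rpow s (by linarith) hlen
  simp only [wgt, Nat.cast_add]
  calc ((p:ℝ) + (q:ℝ) - 1) *
        ((((p + q).factorial : ℕ) : ℝ) ^ σ * (2:ℝ) ^ (ρ * ((p:ℝ) + (q:ℝ)))
          * (1 + ((p:ℝ) + (q:ℝ))) ^ s)
      ≤ (2:ℝ) ^ ((1:ℝ) * ((p:ℝ) + (q:ℝ))) *
        (((2:ℝ) ^ (|σ| * ((p:ℝ) + (q:ℝ))) * (P ^ σ * Q ^ σ))
          * (2:ℝ) ^ (|ρ| * ((p:ℝ) + (q:ℝ))) * (2:ℝ) ^ (|s| * ((p:ℝ) + (q:ℝ)))) := by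
        apply mul_le_mul hB3 _ (by positivity) (by positivity)
        exact mul_le_mul (mul_le_mul hB1 hB4 (by positivity) (by positivity)) hB2
          (by positivity) (by positivity)
    _ = ((2:ℝ) ^ ((1:ℝ) * ((p:ℝ) + (q:ℝ))) * ((2:ℝ) ^ (|σ| * ((p:ℝ) + (q:ℝ)))
          * ((2:ℝ) ^ (|ρ| * ((p:ℝ) + (q:ℝ))) * (2:ℝ) ^ (|s| * ((p:ℝ) + (q:ℝ))))))
          * (P ^ σ * Q ^ σ) := by ring
    _ = (2:ℝ) ^ ((1:ℝ) * ((p:ℝ) + (q:ℝ)) + (|σ| * ((p:ℝ) + (q:ℝ))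
          + (|ρ| * ((p:ℝ) + (q:ℝ)) + |s| * ((p:ℝ) + (q:ℝ))))) * (P ^ σ * Q ^ σ) := by
        rw [collapse, collapse, collapse]
    _ = (2:ℝ) ^ (D * (p:ℝ) + D * (q:ℝ)) * (P ^ σ * Q ^ σ) := by
        rw [show (1:ℝ) * ((p:ℝ) + (q:ℝ)) + (|σ| * ((p:ℝ) + (q:ℝ))
          + (|ρ| * ((p:ℝ) + (q:ℝ)) + |s| * ((p:ℝ) + (q:ℝ))))
          = D * (p:ℝ) + D * (q:ℝ) from by rw [hDdef]; ring]
    _ = ((2:ℝ) ^ (D * (p:ℝ)) * P ^ σ) * ((2:ℝ) ^ (D * (q:ℝ)) * Q ^ σ) := by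
        rw [Real.rpow_add two_pos]; ring
    _ ≤ (E * (P ^ σ' * (2:ℝ) ^ (ρ' * (p:ℝ)) * (1 + (p:ℝ)) ^ s'))
          * (E * (Q ^ σ' * (2:ℝ) ^ (ρ' * (q:ℝ)) * (1 + (q:ℝ)) ^ s')) := by
        exact mul_le_mul (hEr p) (hEr q) (by positivity) (by positivity)
    _ = E * E * (P ^ σ' * (2:ℝ) ^ (ρ' * (p:ℝ)) * (1 + (p:ℝ)) ^ s')
          * (Q ^ σ' * (2:ℝ) ^ (ρ' * (q:ℝ)) * (1 + (q:ℝ)) ^ s') := by ring
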